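/- Let p ≥ 3 be prime, 0 < x < p, k ≥ 1, d ≥ 1 and define S_k(x, p^r) = Σ 1/i^k over integers 0 < i < p^r with i ≡ x (mod p). Then for every r ≥ 2, (S_k(x, p^{r+1}))^d ≡ p^d · (S_k(x, p^r))^d (mod p^{dr+2}). -/

import Mathlib

open Finset

/-- `S p k x R = ∑_{0 < i < R, i ≡ x (mod p)} 1/i^k`. -/
def S (p k x R : ℕ) : ℚ :=
  ∑ i ∈ (Finset.Ioo 0 R).filter (fun i => i % p = x % p), (1 : ℚ) / (i : ℚ)^k

lemma binom_dvd (a u : ℤ) (k : ℕ) :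
    u^2 ∣ (a+u)^(k+1) - a^(k+1) - (k+1)*u*a^k := by
  induction k with
  | zero => refine ⟨0, ?_⟩; push_cast; ring
  | succ k ih =>
    obtain ⟨c, hc⟩ := ih
    refine ⟨(a+u)*c + (k+1)*a^k, ?_⟩
    have h : (a+u)^(k+1) = a^(k+1) + (k+1)*u*a^k + u^2*c := by linarith [hc]
    calc (a+u)^(k+1+1) - a^(k+1+1) - (↑(k+1)+1)*u*a^(k+1)
        = (a+u) * ((a+u)^(k+1)) - a^(k+1+1) - (↑(k+1)+1)*u*a^(k+1) := by ring
      _ = (a+u) * (a^(k+1) + (k+1)*u*a^k + u^2*c) - a^(k+1+1) - (↑(k+1)+1)*u*a^(k+1) := by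
          rw [h]
      _ = u^2 * ((a+u)*c + (k+1)*a^k) + (k+1)*u*(a*a^k) - (k+1)*u*a^(k+1) := by push_cast; ring
      _ = u^2 * ((a+u)*c + (k+1)*a^k) := by rw [← pow_succ']; ring

lemma norm_rat_to_num_dvd {p : ℕ} [hpf : Fact p.Prime] (q : ℚ) (n : ℕ)
    (h : ‖(q : ℚ_[p])‖ ≤ (p:ℝ)^(-(n:ℤ))) : (p:ℤ)^n ∣ q.num := by
  rcases eq_or_ne q 0 with rfl | hq
  · simp
  rw [padicValInt_dvd_iff]
  right
  have hnorm : ‖(q : ℚ_[p])‖ = ((p:ℚ) ^ (-padicValRat p q) : ℚ) := by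
    rw [Padic.eq_padicNorm, padicNorm.eq_zpow_of_nonzero hq]
  rw [hnorm] at h
  push_cast at h
  have hp1 : (1:ℝ) < (p:ℝ) := by exact_mod_cast hpf.out.one_lt
  have hle : -(padicValRat p q) ≤ -(n:ℤ) := by
    exact_mod_cast (zpow_le_zpow_iff_right₀ hp1).mp h
  have : (n:ℤ) ≤ padicValRat p q := by linarith
  rw [padicValRat_def] at this
  omega

section aux
variable {p : ℕ} [hpf : Fact p.Prime]

lemma sum_range_mul {M : Type*} [AddCommMonoid M] (g : ℕ → M) (m n : ℕ) :
    ∑ j ∈ range (n*m), g j = ∑ t ∈ range n, ∑ j0 ∈ range m, g (t*m + j0) := by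
  induction n with
  | zero => simp
  | succ n ih =>
    rw [Nat.succ_mul, Finset.sum_range_add, ih, sum_range_succ]

/-- index set of S as an image -/
lemma filter_eq_image {x : ℕ} (hx : 0 < x) (hxp : x < p) (s : ℕ) (hs : 1 ≤ s) :
    (Finset.Ioo 0 (p^s)).filter (fun i => i % p = x % p)
      = (range (p^(s-1))).image (fun j => x + j*p) := by
  have hp0 : 0 < p := by omega
  ext i
  simp only [mem_filter, mem_Ioo, mem_image, mem_range]
  constructor
  · rintro ⟨⟨hi0, hi1⟩, hmod⟩
    refine ⟨i / p, ?_, ?_⟩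
    · rw [Nat.div_lt_iff_lt_mul hp0]
      calc i < p^s := hi1
        _ = p^(s-1) * p := by rw [← pow_succ]; congr 1; omega
    · rw [Nat.mod_eq_of_lt hxp] at hmod
      have := Nat.mod_add_div' i p
      omega
  · rintro ⟨j, hj, rfl⟩
    have h1 : j * p ≤ (p^(s-1) - 1) * p := by
      exact Nat.mul_le_mul_right p (by omega)
    have h2 : p^(s-1) * p = p^s := by rw [← pow_succ]; congr 1; omega
    refine ⟨⟨by omega, by nlinarith [Nat.one_le_iff_ne_zero.mpr (pow_ne_zero (s-1) (by omega : p ≠ 0))]⟩, ?_⟩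
    simp [Nat.add_mul_mod_self_right, Nat.mod_eq_of_lt hxp]

lemma S_cast {x : ℕ} (hx : 0 < x) (hxp : x < p) (k s : ℕ) (hs : 1 ≤ s) :
    ((S p k x (p^s) : ℚ) : ℚ_[p])
      = ∑ j ∈ range (p^(s-1)), (1 : ℚ_[p]) / (((x + j*p : ℕ)) : ℚ_[p])^k := by
  rw [S, filter_eq_image hx hxp s hs]
  have hinj : ∀ a ∈ range (p^(s-1)), ∀ b ∈ range (p^(s-1)),
      x + a * p = x + b * p → a = b := by
    intro a _ b _ h
    have hp0 : 0 < p := by omega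
    exact Nat.eq_of_mul_eq_mul_right hp0 (by omega)
  rw [Finset.sum_image hinj, Rat.cast_sum]
  push_cast
  rfl
end aux

section aux2
variable {p x : ℕ} [hpf : Fact p.Prime]

lemma not_dvd_term (hx : 0 < x) (hxp : x < p) (j : ℕ) : ¬ (p ∣ x + j*p) := by
  intro h
  have hdx : p ∣ x := (Nat.dvd_add_right (dvd_mul_left p j)).mp (by rwa [Nat.add_comm] at h)
  have := Nat.le_of_dvd hx hdx
  omega

lemma norm_term_one (hx : 0 < x) (hxp : x < p) (j : ℕ) : ‖(((x + j*p : ℕ)) : ℚ_[p])‖ = 1 := by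
  have h1 : ‖(((x + j*p : ℕ) : ℤ) : ℚ_[p])‖ ≤ 1 := Padic.norm_int_le_one _
  have h2 : ¬ ‖(((x + j*p : ℕ) : ℤ) : ℚ_[p])‖ < 1 := by
    rw [Padic.norm_intCast_lt_one_iff]
    exact_mod_cast not_dvd_term hx hxp j
  push_cast at h1 h2 ⊢
  linarith

lemma term_ne_zero (hx : 0 < x) (hxp : x < p) (j m : ℕ) :
    (((x + j*p : ℕ)) : ℚ_[p])^m ≠ 0 := by
  apply pow_ne_zero
  intro h
  have : x + j*p = 0 := Nat.cast_eq_zero.mp h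
  omega

lemma diff_small (hx : 0 < x) (hxp : x < p) (j j' m : ℕ) :
    ‖(1 : ℚ_[p])/(((x + j*p : ℕ)) : ℚ_[p])^m - (1 : ℚ_[p])/(((x + j'*p : ℕ)) : ℚ_[p])^m‖
      ≤ (p:ℝ)^(-1:ℤ) := by
  have hA : (((x + j*p : ℕ)) : ℚ_[p])^m ≠ 0 := term_ne_zero hx hxp j m
  have hB : (((x + j'*p : ℕ)) : ℚ_[p])^m ≠ 0 := term_ne_zero hx hxp j' m
  have hid : (1 : ℚ_[p])/(((x + j*p : ℕ)) : ℚ_[p])^m - (1 : ℚ_[p])/(((x + j'*p : ℕ)) : ℚ_[p])^m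
      = (((((x + j'*p : ℕ):ℤ)^m - (((x + j*p : ℕ)):ℤ)^m) : ℤ) : ℚ_[p])
        / ((((x + j*p : ℕ)) : ℚ_[p])^m * (((x + j'*p : ℕ)) : ℚ_[p])^m) := by
    rw [div_sub_div _ _ hA hB]
    congr 1
    push_cast
    ring
  have hdvd : (p:ℤ) ∣ (((x + j'*p : ℕ)):ℤ)^m - (((x + j*p : ℕ)):ℤ)^m := by
    have h1 : (p:ℤ) ∣ (((x + j'*p : ℕ)):ℤ) - (((x + j*p : ℕ)):ℤ) :=
      ⟨(j':ℤ) - j, by push_cast; ring⟩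
    exact dvd_trans h1 (sub_dvd_pow_sub_pow _ _ m)
  rw [hid, norm_div]
  simp only [norm_mul, norm_pow, norm_term_one hx hxp, one_pow, mul_one, div_one]
  have := (Padic.norm_int_le_pow_iff_dvd
    ((((x + j'*p : ℕ)):ℤ)^m - (((x + j*p : ℕ)):ℤ)^m) 1).mpr (by simpa using hdvd)
  simpa using this

lemma sum_small (hx : 0 < x) (hxp : x < p) (m n : ℕ) (hn : p ∣ n) :
    ‖∑ j ∈ range n, (1 : ℚ_[p])/(((x + j*p : ℕ)) : ℚ_[p])^m‖ ≤ (p:ℝ)^(-1:ℤ) := by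
  have hsplit : ∑ j ∈ range n, (1 : ℚ_[p])/(((x + j*p : ℕ)) : ℚ_[p])^m
      = (∑ j ∈ range n, ((1 : ℚ_[p])/(((x + j*p : ℕ)) : ℚ_[p])^m
          - (1 : ℚ_[p])/(((x + 0*p : ℕ)) : ℚ_[p])^m))
        + (n : ℚ_[p]) * ((1 : ℚ_[p])/(((x + 0*p : ℕ)) : ℚ_[p])^m) := by
    rw [Finset.sum_sub_distrib, Finset.sum_const, card_range, nsmul_eq_mul]
    ring
  rw [hsplit]
  refine le_trans (Padic.nonarchimedean _ _) (max_le ?_ ?_)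
  · exact IsUltrametricDist.norm_sum_le_of_forall_le_of_nonneg
      (by positivity) (fun j _ => diff_small hx hxp j 0 m)
  · rw [norm_mul]
    have h1 : ‖((n:ℤ) : ℚ_[p])‖ ≤ (p:ℝ)^(-1:ℤ) := by
      have := (Padic.norm_int_le_pow_iff_dvd (n:ℤ) 1).mpr
        (by simpa using Int.natCast_dvd_natCast.mpr hn)
      simpa using this
    have h2 : ‖(1 : ℚ_[p])/(((x + 0*p : ℕ)) : ℚ_[p])^m‖ = 1 := by
      rw [norm_div, norm_pow, norm_term_one hx hxp, norm_one, one_pow, div_one]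
    push_cast at h1
    rw [h2, mul_one]
    exact h1

end aux2

section aux3
variable {p x : ℕ} [hpf : Fact p.Prime]

lemma norm_nat_le_inv (n : ℕ) (h : p ∣ n) : ‖(n : ℚ_[p])‖ ≤ (p:ℝ)^(-1:ℤ) := by
  have := (Padic.norm_int_le_pow_iff_dvd (n:ℤ) 1).mpr
    (by simpa using Int.natCast_dvd_natCast.mpr h)
  push_cast at this
  simpa using this

lemma field_id {K : Type*} [Field K] (A B U C : K) (hA : A ≠ 0) (hB : B ≠ 0) (m : ℕ) :
    1/B^(m+1) - 1/A^(m+1) + C*U/A^(m+2)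
      = (A^(m+2) - (A - C*U)*B^(m+1))/(A^(m+2)*B^(m+1)) := by
  rw [div_sub_div _ _ (pow_ne_zero _ hB) (pow_ne_zero _ hA),
    div_add_div _ _ (mul_ne_zero (pow_ne_zero _ hB) (pow_ne_zero _ hA)) (pow_ne_zero _ hA),
    div_eq_div_iff (mul_ne_zero (mul_ne_zero (pow_ne_zero _ hB) (pow_ne_zero _ hA))
      (pow_ne_zero _ hA)) (mul_ne_zero (pow_ne_zero _ hA) (pow_ne_zero _ hB))]
  ring

/-- key per-term estimate -/
lemma cterm (hx : 0 < x) (hxp : x < p) (m j t r : ℕ) (hr1 : 1 ≤ r) :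
    ‖(1 : ℚ_[p])/((((x + j*p) + t*p^r : ℕ)) : ℚ_[p])^(m+1)
      - (1 : ℚ_[p])/(((x + j*p : ℕ)) : ℚ_[p])^(m+1)
      + ((m+1 : ℕ) : ℚ_[p]) * ((t*p^r : ℕ) : ℚ_[p]) / (((x + j*p : ℕ)) : ℚ_[p])^(m+2)‖
      ≤ (p:ℝ)^(-(2*r : ℤ)) := by
  have hidx : (x + j*p) + t*p^r = x + (j + t*p^(r-1))*p := by
    have hpr : p^(r-1)*p = p^r := by rw [← pow_succ]; congr 1; omega
    calc (x + j*p) + t*p^r = x + j*p + t*(p^(r-1)*p) := by rw [hpr]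
      _ = x + (j + t*p^(r-1))*p := by ring
  have hA0 : (((x + j*p : ℕ)) : ℚ_[p]) ≠ 0 := by
    have := term_ne_zero hx hxp j 1
    simpa using this
  have hB0 : ((((x + j*p) + t*p^r : ℕ)) : ℚ_[p]) ≠ 0 := by
    rw [hidx]
    have := term_ne_zero hx hxp (j + t*p^(r-1)) 1
    simpa using this
  -- integer divisibility
  set a : ℤ := ((x + j*p : ℕ) : ℤ) with ha
  set u : ℤ := ((t*p^r : ℕ) : ℤ) with hu
  obtain ⟨c, hc⟩ := binom_dvd a u m
  have hbc : (a+u)^(m+1) = a^(m+1) + (m+1)*u*a^m + u^2*c := by linarith [hc]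
  have hNdvd : (p:ℤ)^(2*r) ∣ a^(m+2) - (a - (m+1)*u)*(a+u)^(m+1) := by
    have h1 : a^(m+2) - (a - (m+1)*u)*(a+u)^(m+1)
        = u^2 * (((m+1)^2*a^m + (m+1)*u*c) - a*c) := by
      rw [hbc]; push_cast; ring
    have h2 : (p:ℤ)^(2*r) ∣ u^2 := ⟨(t:ℤ)^2, by rw [hu]; push_cast; ring⟩
    rw [h1]
    exact Dvd.dvd.mul_right h2 _
  -- field identity
  have hfield : (1 : ℚ_[p])/((((x + j*p) + t*p^r : ℕ)) : ℚ_[p])^(m+1)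
      - (1 : ℚ_[p])/(((x + j*p : ℕ)) : ℚ_[p])^(m+1)
      + ((m+1 : ℕ) : ℚ_[p]) * ((t*p^r : ℕ) : ℚ_[p]) / (((x + j*p : ℕ)) : ℚ_[p])^(m+2)
      = ((a^(m+2) - (a - (m+1)*u)*(a+u)^(m+1) : ℤ) : ℚ_[p])
        / ((((x + j*p : ℕ)) : ℚ_[p])^(m+2) * ((((x + j*p) + t*p^r : ℕ)) : ℚ_[p])^(m+1)) := by
    rw [field_id _ _ _ _ hA0 hB0 m]
    congr 1
    simp only [ha, hu]
    push_cast
    ring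
  rw [hfield, norm_div, norm_mul, norm_pow, norm_pow, norm_term_one hx hxp j, hidx,
    norm_term_one hx hxp (j + t*p^(r-1)), one_pow, one_pow, mul_one, div_one]
  have := (Padic.norm_int_le_pow_iff_dvd
    (a^(m+2) - (a - (m+1)*u)*(a+u)^(m+1)) (2*r)).mpr hNdvd
  exact_mod_cast this

end aux3

section main
variable {p x : ℕ} [hpf : Fact p.Prime]

lemma norm_zpow_anti (hp1 : (1:ℝ) < p) {a b : ℤ} (h : a ≤ b) :
    (p:ℝ)^(-b) ≤ (p:ℝ)^(-a) :=
  (zpow_le_zpow_iff_right₀ hp1).mpr (by omega)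

set_option maxHeartbeats 1000000 in
/-- main congruence: S(p^{r+1}) ≡ p S(p^r) mod p^{r+2} -/
lemma main_congr (hx : 0 < x) (hxp : x < p) (hp3 : 3 ≤ p) (m r : ℕ) (hr : 2 ≤ r) :
    ‖((S p (m+1) x (p^(r+1)) : ℚ) : ℚ_[p]) - (p : ℚ_[p]) * ((S p (m+1) x (p^r) : ℚ) : ℚ_[p])‖
      ≤ (p:ℝ)^(-(r+2 : ℤ)) := by
  have hp1 : (1:ℝ) < p := by exact_mod_cast hpf.out.one_lt
  have hpow : p^(r+1-1) = p * p^(r-1) := by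
    rw [← pow_succ']
    congr 1
    omega
  have h1 : ((S p (m+1) x (p^(r+1)) : ℚ) : ℚ_[p])
      = ∑ t ∈ range p, ∑ j0 ∈ range (p^(r-1)),
          (1 : ℚ_[p])/(((x + (t*p^(r-1)+j0)*p : ℕ)) : ℚ_[p])^(m+1) := by
    rw [S_cast hx hxp (m+1) (r+1) (by omega), hpow, sum_range_mul]
  have h2 : (p : ℚ_[p]) * ((S p (m+1) x (p^r) : ℚ) : ℚ_[p])
      = ∑ t ∈ range p, ∑ j0 ∈ range (p^(r-1)),
          (1 : ℚ_[p])/(((x + j0*p : ℕ)) : ℚ_[p])^(m+1) := by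
    rw [S_cast hx hxp (m+1) r (by omega), Finset.sum_const, card_range, nsmul_eq_mul]
  rw [h1, h2, ← Finset.sum_sub_distrib]
  have hidx : ∀ t j0 : ℕ, x + (t*p^(r-1)+j0)*p = (x + j0*p) + t*p^r := by
    intro t j0
    have hpr : p^(r-1)*p = p^r := by rw [← pow_succ]; congr 1; omega
    calc x + (t*p^(r-1)+j0)*p = x + j0*p + t*(p^(r-1)*p) := by ring
      _ = (x + j0*p) + t*p^r := by rw [hpr]
  -- decompose each difference
  have hterm : ∀ t ∈ range p, (∑ j0 ∈ range (p^(r-1)),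
          (1 : ℚ_[p])/(((x + (t*p^(r-1)+j0)*p : ℕ)) : ℚ_[p])^(m+1))
        - ∑ j0 ∈ range (p^(r-1)), (1 : ℚ_[p])/(((x + j0*p : ℕ)) : ℚ_[p])^(m+1)
      = (∑ j0 ∈ range (p^(r-1)),
          ((1 : ℚ_[p])/((((x + j0*p) + t*p^r : ℕ)) : ℚ_[p])^(m+1)
            - (1 : ℚ_[p])/(((x + j0*p : ℕ)) : ℚ_[p])^(m+1)
            + ((m+1 : ℕ) : ℚ_[p]) * ((t*p^r : ℕ) : ℚ_[p]) / (((x + j0*p : ℕ)) : ℚ_[p])^(m+2)))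
        - ((m+1 : ℕ) : ℚ_[p]) * ((t*p^r : ℕ) : ℚ_[p])
            * ∑ j0 ∈ range (p^(r-1)), (1 : ℚ_[p])/(((x + j0*p : ℕ)) : ℚ_[p])^(m+2) := by
    intro t _
    rw [Finset.mul_sum, ← Finset.sum_sub_distrib, ← Finset.sum_sub_distrib]
    refine Finset.sum_congr rfl fun j0 _ => ?_
    rw [hidx t j0]
    ring
  rw [Finset.sum_congr rfl hterm, Finset.sum_sub_distrib, sub_eq_add_neg]
  refine le_trans (Padic.nonarchimedean _ _) (max_le ?_ ?_)
  · -- double sum of c-terms: bounded by p^{-2r} ≤ p^{-(r+2)}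
    refine le_trans (IsUltrametricDist.norm_sum_le_of_forall_le_of_nonneg (by positivity)
      (fun t _ => IsUltrametricDist.norm_sum_le_of_forall_le_of_nonneg (by positivity)
        (fun j0 _ => cterm hx hxp m j0 t r (by omega)))) ?_
    exact norm_zpow_anti hp1 (by omega)
  · -- correction term
    rw [norm_neg, ← Finset.sum_mul, norm_mul]
    have hp0 : (0:ℝ) < p := by linarith
    -- p divides the Gauss sum
    have hgauss : p ∣ ∑ t ∈ range p, t := by
      have h2 : (∑ t ∈ range p, t) * 2 = p * (p-1) := Finset.sum_range_id_mul_two p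
      have hcop : Nat.Coprime p 2 := (hpf.out.coprime_iff_not_dvd).mpr
        (fun h => by have := Nat.le_of_dvd (by norm_num) h; omega)
      exact hcop.dvd_of_dvd_mul_right (h2 ▸ Dvd.intro _ rfl)
    have hsum_eq : ∑ t ∈ range p, ((m+1 : ℕ) : ℚ_[p]) * ((t*p^r : ℕ) : ℚ_[p])
        = ((((m+1)*p^r) * (∑ t ∈ range p, t) : ℕ) : ℚ_[p]) := by
      have hper : ∀ t ∈ range p, ((m+1 : ℕ) : ℚ_[p]) * ((t*p^r : ℕ) : ℚ_[p])
          = ((((m+1)*p^r) : ℕ) : ℚ_[p]) * (t : ℚ_[p]) := fun t _ => by push_cast; ring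
      rw [Finset.sum_congr rfl hper, ← Finset.mul_sum]
      push_cast
      ring
    have hT : ‖∑ t ∈ range p, ((m+1 : ℕ) : ℚ_[p]) * ((t*p^r : ℕ) : ℚ_[p])‖
        ≤ (p:ℝ)^(-(r+1 : ℤ)) := by
      rw [hsum_eq]
      have hdvd : p^(r+1) ∣ ((m+1)*p^r) * (∑ t ∈ range p, t) := by
        obtain ⟨s, hs⟩ := hgauss
        exact ⟨(m+1)*s, by rw [hs, pow_succ]; ring⟩
      have := (Padic.norm_int_le_pow_iff_dvd
        ((((m+1)*p^r) * (∑ t ∈ range p, t) : ℕ) : ℤ) (r+1)).mpr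
        (by exact_mod_cast Int.natCast_dvd_natCast.mpr hdvd)
      push_cast at this ⊢
      exact_mod_cast this
    have hW := sum_small hx hxp (m+2) (p^(r-1)) (dvd_pow_self p (by omega : r-1 ≠ 0))
    have hmul : (p:ℝ)^(-(r+1:ℤ)) * (p:ℝ)^(-1:ℤ) = (p:ℝ)^(-(r+2:ℤ)) := by
      rw [← zpow_add₀ (ne_of_gt hp0)]
      congr 1
    calc ‖∑ t ∈ range p, ((m+1 : ℕ) : ℚ_[p]) * ((t*p^r : ℕ) : ℚ_[p])‖
          * ‖∑ j0 ∈ range (p^(r-1)), (1 : ℚ_[p])/(((x + j0*p : ℕ)) : ℚ_[p])^(m+2)‖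
        ≤ (p:ℝ)^(-(r+1:ℤ)) * (p:ℝ)^(-1:ℤ) :=
          mul_le_mul hT hW (norm_nonneg _) (by positivity)
      _ = (p:ℝ)^(-(r+2:ℤ)) := hmul

end main

section final
variable {p x : ℕ} [hpf : Fact p.Prime]

lemma S_norm (hx : 0 < x) (hxp : x < p) (hp3 : 3 ≤ p) (m : ℕ) :
    ∀ s : ℕ, 2 ≤ s → ‖((S p (m+1) x (p^s) : ℚ) : ℚ_[p])‖ ≤ (p:ℝ)^(-((s:ℤ)-1)) := by
  have hp1 : (1:ℝ) < p := by exact_mod_cast hpf.out.one_lt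
  have hp0 : (0:ℝ) < p := by linarith
  refine Nat.le_induction ?_ ?_
  · rw [S_cast hx hxp (m+1) 2 (by omega)]
    have := sum_small (p := p) hx hxp (m+1) (p^(2-1)) (by rw [pow_one])
    simpa using this
  · intro s hs ih
    have hmc := main_congr hx hxp hp3 m s hs
    have hsplit : ((S p (m+1) x (p^(s+1)) : ℚ) : ℚ_[p])
        = (((S p (m+1) x (p^(s+1)) : ℚ) : ℚ_[p]) - (p : ℚ_[p]) * ((S p (m+1) x (p^s) : ℚ) : ℚ_[p]))
          + (p : ℚ_[p]) * ((S p (m+1) x (p^s) : ℚ) : ℚ_[p]) := by ring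
    rw [hsplit]
    refine le_trans (Padic.nonarchimedean _ _) (max_le ?_ ?_)
    · exact le_trans hmc (norm_zpow_anti hp1 (by omega))
    · rw [norm_mul, Padic.norm_p]
      have h1 : ((p:ℝ))⁻¹ = (p:ℝ)^(-1:ℤ) := by
        rw [zpow_neg_one]
      rw [h1]
      calc (p:ℝ)^(-1:ℤ) * ‖((S p (m+1) x (p^s) : ℚ) : ℚ_[p])‖
          ≤ (p:ℝ)^(-1:ℤ) * (p:ℝ)^(-((s:ℤ)-1)) :=
            mul_le_mul_of_nonneg_left ih (by positivity)
        _ = (p:ℝ)^(-(((s:ℤ)+1)-1)) := by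
            rw [← zpow_add₀ (ne_of_gt hp0)]
            congr 1
            ring
        _ = (p:ℝ)^(-(((s+1:ℕ):ℤ)-1)) := by push_cast; ring_nf

end final

theorem stmt10 (p x k d : ℕ) (hp : p.Prime) (hp3 : 3 ≤ p) (hx : 0 < x) (hxp : x < p)
    (hk : 1 ≤ k) (hd : 1 ≤ d) (r : ℕ) (hr : 2 ≤ r) :
    (p : ℤ)^(d*r+2) ∣ ((S p k x (p^(r+1)))^d - (p : ℚ)^d * (S p k x (p^r))^d).num := by
  haveI : Fact p.Prime := ⟨hp⟩
  obtain ⟨m, rfl⟩ : ∃ m, k = m + 1 := ⟨k - 1, by omega⟩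
  have hp1 : (1:ℝ) < p := by exact_mod_cast hp.one_lt
  have hp0 : (0:ℝ) < p := by linarith
  set A : ℚ_[p] := ((S p (m+1) x (p^(r+1)) : ℚ) : ℚ_[p]) with hA
  set B : ℚ_[p] := (p : ℚ_[p]) * ((S p (m+1) x (p^r) : ℚ) : ℚ_[p]) with hB
  have hnormA : ‖A‖ ≤ (p:ℝ)^(-(r:ℤ)) := by
    have := S_norm hx hxp hp3 m (r+1) (by omega)
    rw [← hA] at this
    convert this using 2
    push_cast
    ring
  have hnormB : ‖B‖ ≤ (p:ℝ)^(-(r:ℤ)) := by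
    rw [hB, norm_mul, Padic.norm_p]
    have := S_norm hx hxp hp3 m r (by omega)
    calc (p:ℝ)⁻¹ * ‖((S p (m+1) x (p^r) : ℚ) : ℚ_[p])‖
        ≤ (p:ℝ)^(-1:ℤ) * (p:ℝ)^(-((r:ℤ)-1)) := by
          rw [zpow_neg_one]
          exact mul_le_mul_of_nonneg_left this (by positivity)
      _ = (p:ℝ)^(-(r:ℤ)) := by
          rw [← zpow_add₀ (ne_of_gt hp0)]
          congr 1
          ring
  have hAB : ‖A - B‖ ≤ (p:ℝ)^(-((r:ℤ)+2)) := by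
    have := main_congr hx hxp hp3 m r hr
    rw [← hA, ← hB] at this
    convert this using 2
  apply norm_rat_to_num_dvd
  have hcast : (((S p (m+1) x (p^(r+1)))^d - (p : ℚ)^d * (S p (m+1) x (p^r))^d : ℚ) : ℚ_[p])
      = A^d - B^d := by
    rw [hA, hB]
    push_cast
    ring
  rw [hcast, ← geom_sum₂_mul A B d, norm_mul]
  have hterm : ∀ i ∈ range d, ‖A^i * B^(d-1-i)‖ ≤ (p:ℝ)^(-((r:ℤ)*((d:ℤ)-1))) := by
    intro i hi
    rw [mem_range] at hi
    rw [norm_mul, norm_pow, norm_pow]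
    calc ‖A‖^i * ‖B‖^(d-1-i)
        ≤ ((p:ℝ)^(-(r:ℤ)))^i * ((p:ℝ)^(-(r:ℤ)))^(d-1-i) := by
          exact mul_le_mul (pow_le_pow_left₀ (norm_nonneg _) hnormA i)
            (pow_le_pow_left₀ (norm_nonneg _) hnormB (d-1-i))
            (by positivity) (by positivity)
      _ = (p:ℝ)^(-(r:ℤ)*(i:ℤ) + -(r:ℤ)*((d:ℤ)-1-(i:ℤ))) := by
          rw [← zpow_natCast ((p:ℝ)^(-(r:ℤ))) i, ← zpow_natCast ((p:ℝ)^(-(r:ℤ))) (d-1-i),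
            ← zpow_mul, ← zpow_mul, ← zpow_add₀ (ne_of_gt hp0)]
          congr 1
          have h' : ((d-1-i : ℕ) : ℤ) = (d:ℤ)-1-(i:ℤ) := by omega
          rw [h']
      _ = (p:ℝ)^(-((r:ℤ)*((d:ℤ)-1))) := by
          congr 1
          ring
  have hsum : ‖∑ i ∈ range d, A^i * B^(d-1-i)‖ ≤ (p:ℝ)^(-((r:ℤ)*((d:ℤ)-1))) :=
    IsUltrametricDist.norm_sum_le_of_forall_le_of_nonneg (by positivity) hterm
  calc ‖∑ i ∈ range d, A^i * B^(d-1-i)‖ * ‖A - B‖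
      ≤ (p:ℝ)^(-((r:ℤ)*((d:ℤ)-1))) * (p:ℝ)^(-((r:ℤ)+2)) :=
        mul_le_mul hsum hAB (norm_nonneg _) (by positivity)
    _ = (p:ℝ)^(-((d*r+2:ℕ):ℤ)) := by
        rw [← zpow_add₀ (ne_of_gt hp0)]
        congr 1
        push_cast
        ring
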